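/- Let P = {0 = x₁ < x₂ < ⋯ < xₙ = 1} be a set of parameter values, C : [0,1] → ℝ² a 1-Lipschitz curve, ε > 0, and let x_min ∈ P minimize ‖C(x_i)‖. If P is a proof set, then for every 1-Lipschitz curve C' : [0,1] → ℝ² with C'(x_i) = C(x_i) for all i, we have ‖C'(x_min)‖ ≤ min_{x∈[0,1]} ‖C'(x)‖ + ε. Conversely, if P is not a proof set, then there exists a 1-Lipschitz C' with C'(x_i) = C(x_i) for all i such that ‖C'(x_min)‖ > min_{x∈[0,1]} ‖C'(x)‖ + ε. -/

import Mathlib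

noncomputable def closestPossible (C : ℝ → EuclideanSpace ℝ (Fin 2)) (a b : ℝ) : ℝ :=
  sInf ((fun p => ‖p‖) '' {p : EuclideanSpace ℝ (Fin 2) | ‖C a - p‖ + ‖C b - p‖ ≤ b - a})

section detour
variable {E : Type*} [NormedAddCommGroup E] [NormedSpace ℝ E]

lemma smul_norm_inv_self (w : E) : ‖w‖ • (‖w‖⁻¹ • w) = w := by
  rcases eq_or_ne ‖w‖ 0 with h | h
  · rw [norm_eq_zero] at h; simp [h]
  · rw [smul_smul, mul_inv_cancel₀ h, one_smul]

lemma norm_inv_smul_le_one (w : E) : ‖‖w‖⁻¹ • w‖ ≤ 1 := by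
  rcases eq_or_ne ‖w‖ 0 with h | h
  · simp [norm_smul, h]
  · rw [norm_smul, Real.norm_eq_abs, abs_inv, abs_of_nonneg (norm_nonneg w),
      inv_mul_cancel₀ h]

noncomputable def detour (q1 q2 p : E) (a b t : ℝ) : E :=
  q1 + (min t (a + ‖q1 - p‖) - a) • (‖q1 - p‖⁻¹ • (p - q1))
     + (max t (b - ‖q2 - p‖) - (b - ‖q2 - p‖)) • (‖q2 - p‖⁻¹ • (q2 - p))

lemma detour_a (q1 q2 p : E) (a b : ℝ) (hsum : ‖q1 - p‖ + ‖q2 - p‖ ≤ b - a) :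
    detour q1 q2 p a b a = q1 := by
  have h1 : min a (a + ‖q1 - p‖) = a := min_eq_left (le_add_of_nonneg_right (norm_nonneg _))
  have h2 : max a (b - ‖q2 - p‖) = b - ‖q2 - p‖ :=
    max_eq_right (by nlinarith [norm_nonneg (q1 - p)])
  simp [detour, h1, h2]

lemma detour_mid (q1 q2 p : E) (a b : ℝ) (hsum : ‖q1 - p‖ + ‖q2 - p‖ ≤ b - a) :
    detour q1 q2 p a b (a + ‖q1 - p‖) = p := by
  have h2 : max (a + ‖q1 - p‖) (b - ‖q2 - p‖) = b - ‖q2 - p‖ :=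
    max_eq_right (by linarith)
  have h3 : a + ‖q1 - p‖ - a = ‖q1 - p‖ := by ring
  have h4 : ‖q1 - p‖ = ‖p - q1‖ := norm_sub_rev _ _
  rw [detour, min_self, h2, h3, h4, smul_norm_inv_self]
  simp

lemma detour_b (q1 q2 p : E) (a b : ℝ) (hsum : ‖q1 - p‖ + ‖q2 - p‖ ≤ b - a) :
    detour q1 q2 p a b b = q2 := by
  have h1 : min b (a + ‖q1 - p‖) = a + ‖q1 - p‖ :=
    min_eq_right (by nlinarith [norm_nonneg (q2 - p)])
  have h2 : max b (b - ‖q2 - p‖) = b := max_eq_left (by nlinarith [norm_nonneg (q2 - p)])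
  have h3 : a + ‖q1 - p‖ - a = ‖q1 - p‖ := by ring
  have h4 : ‖q1 - p‖ = ‖p - q1‖ := norm_sub_rev _ _
  have h5 : b - (b - ‖q2 - p‖) = ‖q2 - p‖ := by ring
  rw [detour, h1, h2, h3, h5, h4, smul_norm_inv_self, smul_norm_inv_self]
  abel

lemma minmax_aux (s t c d : ℝ) (hst : s ≤ t) (hcd : c ≤ d) :
    (min t c - min s c) + (max t d - max s d) ≤ t - s := by
  rw [min_def, min_def, max_def, max_def]
  split_ifs <;> linarith

lemma detour_lip (q1 q2 p : E) (a b : ℝ) (hsum : ‖q1 - p‖ + ‖q2 - p‖ ≤ b - a)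
    (s t : ℝ) (hst : s ≤ t) :
    ‖detour q1 q2 p a b t - detour q1 q2 p a b s‖ ≤ t - s := by
  set c := a + ‖q1 - p‖ with hc
  set d := b - ‖q2 - p‖ with hd
  set u1 := ‖q1 - p‖⁻¹ • (p - q1) with hu1
  set u2 := ‖q2 - p‖⁻¹ • (q2 - p) with hu2
  have hcd : c ≤ d := by rw [hc, hd]; linarith
  have e : detour q1 q2 p a b t - detour q1 q2 p a b s
      = (min t c - min s c) • u1 + (max t d - max s d) • u2 := by
    simp only [detour, ← hc, ← hd, ← hu1, ← hu2]
    module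
  have hΔ1 : 0 ≤ min t c - min s c := by
    have := min_le_min hst (le_refl c); linarith
  have hΔ2 : 0 ≤ max t d - max s d := by
    have := max_le_max hst (le_refl d); linarith
  have hn1 : ‖u1‖ ≤ 1 := by
    rw [hu1, norm_sub_rev q1 p]; exact norm_inv_smul_le_one (p - q1)
  have hn2 : ‖u2‖ ≤ 1 := norm_inv_smul_le_one (q2 - p)
  have hmm := minmax_aux s t c d hst hcd
  clear_value u1 u2
  calc ‖detour q1 q2 p a b t - detour q1 q2 p a b s‖
      ≤ ‖(min t c - min s c) • u1‖ + ‖(max t d - max s d) • u2‖ := by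
        rw [e]; exact norm_add_le _ _
    _ = |min t c - min s c| * ‖u1‖ + |max t d - max s d| * ‖u2‖ := by
        rw [norm_smul, norm_smul, Real.norm_eq_abs, Real.norm_eq_abs]
    _ ≤ (min t c - min s c) * 1 + (max t d - max s d) * 1 := by
        rw [abs_of_nonneg hΔ1, abs_of_nonneg hΔ2]
        gcongr
    _ ≤ t - s := by linarith

end detour

theorem stmt_9 (C : ℝ → EuclideanSpace ℝ (Fin 2))
    (hC : ∀ a ∈ Set.Icc (0:ℝ) 1, ∀ b ∈ Set.Icc (0:ℝ) 1, ‖C a - C b‖ ≤ |a - b|)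
    (ε : ℝ) (hε : 0 < ε)
    (n : ℕ) (x : Fin (n + 1) → ℝ) (hmono : StrictMono x)
    (hx0 : x 0 = 0) (hxn : x (Fin.last n) = 1)
    (m : Fin (n + 1)) (hm : ∀ i : Fin (n + 1), ‖C (x m)‖ ≤ ‖C (x i)‖) :
    -- if P is a proof set, x_min is a valid answer for any agreeing curve
    ((∀ i : Fin n, ‖C (x m)‖ - ε ≤ closestPossible C (x i.castSucc) (x i.succ)) →
      ∀ C' : ℝ → EuclideanSpace ℝ (Fin 2),
        (∀ a ∈ Set.Icc (0:ℝ) 1, ∀ b ∈ Set.Icc (0:ℝ) 1, ‖C' a - C' b‖ ≤ |a - b|) →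
        (∀ i : Fin (n + 1), C' (x i) = C (x i)) →
        ‖C' (x m)‖ ≤ sInf ((fun t => ‖C' t‖) '' Set.Icc (0:ℝ) 1) + ε) ∧
    -- converse: if P is not a proof set, there is an agreeing curve for which it is not
    (¬ (∀ i : Fin n, ‖C (x m)‖ - ε ≤ closestPossible C (x i.castSucc) (x i.succ)) →
      ∃ C' : ℝ → EuclideanSpace ℝ (Fin 2),
        (∀ a ∈ Set.Icc (0:ℝ) 1, ∀ b ∈ Set.Icc (0:ℝ) 1, ‖C' a - C' b‖ ≤ |a - b|) ∧
        (∀ i : Fin (n + 1), C' (x i) = C (x i)) ∧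
        ‖C' (x m)‖ > sInf ((fun t => ‖C' t‖) '' Set.Icc (0:ℝ) 1) + ε) := by
  classical
  have hn : 0 < n := by
    rcases Nat.eq_zero_or_pos n with h | h
    · subst h
      rw [show (Fin.last 0) = 0 from rfl, hx0] at hxn
      norm_num at hxn
    · exact h
  have hxmem : ∀ i : Fin (n+1), x i ∈ Set.Icc (0:ℝ) 1 := by
    intro i
    constructor
    · rw [← hx0]; exact hmono.monotone (Fin.zero_le i)
    · rw [← hxn]; exact hmono.monotone (Fin.le_last i)
  -- locate any t ∈ [0,1] in a subinterval
  have exists_i : ∀ t ∈ Set.Icc (0:ℝ) 1, ∃ i : Fin n, x i.castSucc ≤ t ∧ t ≤ x i.succ := by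
    intro t ht
    set T : Finset (Fin n) := Finset.univ.filter (fun i => x i.castSucc ≤ t) with hT
    have hmemT : ∀ j : Fin n, j ∈ T ↔ x j.castSucc ≤ t := by
      intro j; rw [hT, Finset.mem_filter]; simp
    have h0T : (⟨0, hn⟩ : Fin n) ∈ T := by
      rw [hmemT]
      have h00 : (⟨0, hn⟩ : Fin n).castSucc = (0 : Fin (n+1)) := rfl
      rw [h00, hx0]; exact ht.1
    have hTne : T.Nonempty := ⟨_, h0T⟩
    obtain ⟨i, hi⟩ : ∃ i : Fin n, i = T.max' hTne := ⟨_, rfl⟩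
    have hi1 : x i.castSucc ≤ t := (hmemT _).mp (hi ▸ T.max'_mem hTne)
    refine ⟨i, hi1, ?_⟩
    by_contra hcon
    push_neg at hcon
    have hlt : x i.succ < x (Fin.last n) := by
      rw [hxn]; exact lt_of_lt_of_le hcon ht.2
    have hsucclt : i.succ < Fin.last n := hmono.lt_iff_lt.mp hlt
    have hi' : i.val + 1 < n := by
      simpa [Fin.lt_def] using hsucclt
    have hmem : (⟨i.val + 1, hi'⟩ : Fin n) ∈ T := by
      have hcs : (⟨i.val + 1, hi'⟩ : Fin n).castSucc = i.succ := by
        ext; simp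
      rw [hmemT, hcs]
      exact le_of_lt hcon
    have hle := T.le_max' _ hmem
    rw [← hi] at hle
    have : i.val + 1 ≤ i.val := by simpa [Fin.le_def] using hle
    omega
  constructor
  · -- forward direction
    intro hproof C' hC' hagree
    have key : ∀ t ∈ Set.Icc (0:ℝ) 1, ‖C (x m)‖ - ε ≤ ‖C' t‖ := by
      intro t ht
      obtain ⟨i, hi1, hi2⟩ := exists_i t ht
      have hp : ‖C (x i.castSucc) - C' t‖ + ‖C (x i.succ) - C' t‖
          ≤ x i.succ - x i.castSucc := by
        rw [← hagree i.castSucc, ← hagree i.succ]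
        have h1 := hC' _ (hxmem i.castSucc) t ht
        have h2 := hC' _ (hxmem i.succ) t ht
        rw [abs_of_nonpos (by linarith)] at h1
        rw [abs_of_nonneg (by linarith)] at h2
        linarith
      have hle : closestPossible C (x i.castSucc) (x i.succ) ≤ ‖C' t‖ := by
        apply csInf_le
        · exact ⟨0, by rintro y ⟨q, _, rfl⟩; exact norm_nonneg q⟩
        · exact ⟨C' t, hp, rfl⟩
      linarith [hproof i]
    have hne : ((fun t => ‖C' t‖) '' Set.Icc (0:ℝ) 1).Nonempty :=
      ⟨‖C' 0‖, 0, by norm_num, rfl⟩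
    have hlb : ‖C (x m)‖ - ε ≤ sInf ((fun t => ‖C' t‖) '' Set.Icc (0:ℝ) 1) := by
      apply le_csInf hne
      rintro y ⟨t, ht, rfl⟩
      exact key t ht
    rw [hagree m]
    linarith
  · -- converse direction
    intro hnot
    push_neg at hnot
    obtain ⟨i, hi⟩ := hnot
    set a := x i.castSucc with ha
    set b := x i.succ with hb
    have hab : a < b := hmono (Fin.castSucc_lt_succ : i.castSucc < i.succ)
    have ha01 : a ∈ Set.Icc (0:ℝ) 1 := hxmem i.castSucc
    have hb01 : b ∈ Set.Icc (0:ℝ) 1 := hxmem i.succ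
    -- the defining set is nonempty
    have hSne : ((fun p => ‖p‖) ''
        {p : EuclideanSpace ℝ (Fin 2) | ‖C a - p‖ + ‖C b - p‖ ≤ b - a}).Nonempty := by
      refine ⟨‖C a‖, C a, ?_, rfl⟩
      simp only [Set.mem_setOf_eq, sub_self, norm_zero, zero_add]
      have := hC b hb01 a ha01
      rw [abs_of_nonneg (by linarith)] at this
      linarith
    obtain ⟨y, hy, hylt⟩ := exists_lt_of_csInf_lt hSne hi
    obtain ⟨p, hpmem, rfl⟩ := hy
    simp only [Set.mem_setOf_eq] at hpmem
    -- construct the curve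
    set path : ℝ → EuclideanSpace ℝ (Fin 2) := detour (C a) (C b) p a b with hpath
    have hpa : path a = C a := detour_a _ _ _ _ _ hpmem
    have hpb : path b = C b := detour_b _ _ _ _ _ hpmem
    set c := a + ‖C a - p‖ with hc
    have hpc : path c = p := detour_mid _ _ _ _ _ hpmem
    have hac : a ≤ c := le_add_of_nonneg_right (norm_nonneg _)
    have hcb : c ≤ b := by
      have := norm_nonneg (C b - p); rw [hc]; linarith
    have hplip : ∀ s t : ℝ, s ≤ t → ‖path s - path t‖ ≤ t - s := by
      intro s t hst
      rw [norm_sub_rev]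
      exact detour_lip _ _ _ _ _ hpmem s t hst
    set C' : ℝ → EuclideanSpace ℝ (Fin 2) :=
      fun t => if a < t ∧ t < b then path t else C t with hC'def
    have hCo : ∀ t : ℝ, t ≤ a ∨ b ≤ t → C' t = C t := by
      intro t h
      rw [hC'def]
      simp only
      rw [if_neg]
      rintro ⟨h1, h2⟩
      rcases h with h | h <;> linarith
    have hCp : ∀ t : ℝ, a ≤ t → t ≤ b → C' t = path t := by
      intro t h1 h2
      rcases eq_or_lt_of_le h1 with h1e | h1'
      · rw [← h1e, hCo a (Or.inl le_rfl), hpa]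
      · rcases eq_or_lt_of_le h2 with h2e | h2'
        · rw [h2e, hCo b (Or.inr le_rfl), hpb]
        · rw [hC'def]; simp only; rw [if_pos ⟨h1', h2'⟩]
    -- Lipschitz
    have hlip : ∀ s ∈ Set.Icc (0:ℝ) 1, ∀ t ∈ Set.Icc (0:ℝ) 1, ‖C' s - C' t‖ ≤ |s - t| := by
      have key : ∀ s t : ℝ, 0 ≤ s → t ≤ 1 → s ≤ t → ‖C' s - C' t‖ ≤ t - s := by
        intro s t hs0 ht1 hst
        have hs1 : s ≤ 1 := le_trans hst ht1
        have ht0 : 0 ≤ t := le_trans hs0 hst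
        rcases le_total t a with h1 | h1
        · rw [hCo s (Or.inl (le_trans hst h1)), hCo t (Or.inl h1)]
          have := hC s ⟨hs0, hs1⟩ t ⟨ht0, ht1⟩
          rw [abs_of_nonpos (by linarith)] at this
          linarith
        rcases le_total b s with h2 | h2
        · rw [hCo s (Or.inr h2), hCo t (Or.inr (le_trans h2 hst))]
          have := hC s ⟨hs0, hs1⟩ t ⟨ht0, ht1⟩
          rw [abs_of_nonpos (by linarith)] at this
          linarith
        rcases le_total s a with h3 | h3
        · rcases le_total t b with h4 | h4
          · -- s ≤ a ≤ t ≤ b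
            rw [hCo s (Or.inl h3), hCp t h1 h4]
            calc ‖C s - path t‖ ≤ ‖C s - C a‖ + ‖C a - path t‖ :=
                  norm_sub_le_norm_sub_add_norm_sub _ _ _
              _ ≤ (a - s) + (t - a) := by
                  have e1 := hC s ⟨hs0, hs1⟩ a ha01
                  rw [abs_of_nonpos (by linarith)] at e1
                  have e2 : ‖C a - path t‖ ≤ t - a := by
                    rw [← hpa]; exact hplip a t h1
                  gcongr <;> linarith
              _ = t - s := by ring
          · -- s ≤ a, b ≤ t
            rw [hCo s (Or.inl h3), hCo t (Or.inr h4)]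
            calc ‖C s - C t‖ ≤ ‖C s - C a‖ + ‖C a - C t‖ :=
                  norm_sub_le_norm_sub_add_norm_sub _ _ _
              _ ≤ ‖C s - C a‖ + (‖C a - C b‖ + ‖C b - C t‖) := by
                  gcongr; exact norm_sub_le_norm_sub_add_norm_sub _ _ _
              _ ≤ t - s := by
                  have e1 := hC s ⟨hs0, hs1⟩ a ha01
                  rw [abs_of_nonpos (by linarith)] at e1
                  have e2 := hC a ha01 b hb01
                  rw [abs_of_nonpos (by linarith)] at e2
                  have e3 := hC b hb01 t ⟨ht0, ht1⟩
                  rw [abs_of_nonpos (by linarith)] at e3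
                  linarith
        · rcases le_total t b with h4 | h4
          · -- a ≤ s ≤ t ≤ b
            rw [hCp s h3 h2, hCp t h1 h4]
            exact hplip s t hst
          · -- a ≤ s ≤ b ≤ t
            rw [hCp s h3 h2, hCo t (Or.inr h4)]
            calc ‖path s - C t‖ ≤ ‖path s - path b‖ + ‖path b - C t‖ :=
                  norm_sub_le_norm_sub_add_norm_sub _ _ _
              _ ≤ (b - s) + (t - b) := by
                  have e1 := hplip s b h2
                  have e2 : ‖path b - C t‖ ≤ t - b := by
                    rw [hpb]
                    have := hC b hb01 t ⟨ht0, ht1⟩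
                    rw [abs_of_nonpos (by linarith)] at this
                    linarith
                  gcongr
              _ = t - s := by ring
      intro s hs t ht
      rcases le_total s t with h | h
      · rw [abs_of_nonpos (by linarith)]
        have := key s t hs.1 ht.2 h
        linarith
      · rw [abs_of_nonneg (by linarith), norm_sub_rev]
        have := key t s ht.1 hs.2 h
        linarith
    -- agreement at the nodes
    have hagree : ∀ j : Fin (n+1), C' (x j) = C (x j) := by
      intro j
      rcases le_or_gt j i.castSucc with h | h
      · exact hCo _ (Or.inl (hmono.monotone h))
      · exact hCo _ (Or.inr (hmono.monotone (Fin.castSucc_lt_iff_succ_le.mp h)))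
    refine ⟨C', hlip, hagree, ?_⟩
    have hc01 : c ∈ Set.Icc (0:ℝ) 1 := ⟨le_trans ha01.1 hac, le_trans hcb hb01.2⟩
    have hinf : sInf ((fun t => ‖C' t‖) '' Set.Icc (0:ℝ) 1) ≤ ‖p‖ := by
      apply csInf_le
      · exact ⟨0, by rintro y ⟨t, _, rfl⟩; exact norm_nonneg _⟩
      · exact ⟨c, hc01, by show ‖C' c‖ = ‖p‖; rw [hCp c hac hcb, hpc]⟩
    rw [hagree m]
    linarith
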